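/- Lucas-Pantograph-Pythagorean identities: for x ∈ ℂ and nonzero u, v ∈ ℂ, assuming the series defining sin_{s,t}(x,u), cos_{s,t}(x,u), sin_{s,t}(x,v) and cos_{s,t}(x,v) converge absolutely: (1) sin_{s,t}(x,u)·sin_{s,t}(x,v) + cos_{s,t}(x,u)·cos_{s,t}(x,v) = Σ_{n=0}^{∞} (−1)ⁿ·0̄_{u,v}^{(2n)}·x^{2n}/{2n}_{s,t}!; (2) if in addition s² + 4t ≠ 0, then sin_{s,t}(x,φ)·sin_{s,t}(x,φ') + cos_{s,t}(x,φ)·cos_{s,t}(x,φ') = 1. -/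

import Mathlib

open scoped BigOperators

noncomputable section

/-- The Lucas sequence `{n}_{s,t}`. -/
def lucasSeq (s t : ℂ) : ℕ → ℂ
  | 0 => 0
  | 1 => 1
  | n + 2 => s * lucasSeq s t (n + 1) + t * lucasSeq s t n

/-- The Lucastorial `{n}_{s,t}!`. -/
def lucasFact (s t : ℂ) : ℕ → ℂ
  | 0 => 1
  | n + 1 => lucasFact s t n * lucasSeq s t (n + 1)

/-- The Lucasnomial coefficient `{n choose k}_{s,t}`. -/
def lucasBinom (s t : ℂ) (n k : ℕ) : ℂ :=
  lucasFact s t n / (lucasFact s t k * lucasFact s t (n - k))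

/-- The `(u,v)`-deformed Lucasnomial power `(x ⊕_{u,v} y)^{(n)}`. -/
def lucasPow (s t u v x y : ℂ) (n : ℕ) : ℂ :=
  ∑ k ∈ Finset.range (n + 1),
    lucasBinom s t n k * u ^ ((n - k).choose 2) * v ^ (k.choose 2) * x ^ (n - k) * y ^ k

/-- The Lucas-derivative with respect to the roots `p = φ`, `q = φ'`. -/
def lucasDeriv (p q : ℂ) (f : ℂ → ℂ) (x : ℂ) : ℂ :=
  (f (p * x) - f (q * x)) / ((p - q) * x)

/-- The Lucas-derivative, extended by `0` at `0`, as an operator suitable for iteration. -/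
def lucasDeriv0 (p q : ℂ) (f : ℂ → ℂ) : ℂ → ℂ :=
  fun x => if x = 0 then 0 else (f (p * x) - f (q * x)) / ((p - q) * x)

/-- The Lucas-Pantograph exponential `exp_{s,t}(z,u)`. -/
def lucasExp (s t u z : ℂ) : ℂ :=
  ∑' n : ℕ, u ^ (n.choose 2) * z ^ n / lucasFact s t n

/-- The Lucas-Pantograph sine `sin_{s,t}(z,u)`. -/
def lucasSin (s t u z : ℂ) : ℂ :=
  ∑' n : ℕ, (-1 : ℂ) ^ n * u ^ ((2 * n + 1).choose 2) * z ^ (2 * n + 1) / lucasFact s t (2 * n + 1)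

/-- The Lucas-Pantograph cosine `cos_{s,t}(z,u)`. -/
def lucasCos (s t u z : ℂ) : ℂ :=
  ∑' n : ℕ, (-1 : ℂ) ^ n * u ^ ((2 * n).choose 2) * z ^ (2 * n) / lucasFact s t (2 * n)

/-- The `(u,v)`-deformed Lucasnomial zero `0̄_{u,v}^{(n)}`. -/
def lucasZero (s t u v : ℂ) (n : ℕ) : ℂ :=
  ∑ k ∈ Finset.range (n + 1),
    (-1 : ℂ) ^ k * lucasBinom s t n k * u ^ ((n - k).choose 2) * v ^ (k.choose 2)

lemma lucasFact_ne_zero (s t : ℂ) (hL : ∀ n : ℕ, 1 ≤ n → lucasSeq s t n ≠ 0) :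
    ∀ n, lucasFact s t n ≠ 0 := by
  intro n
  induction n with
  | zero => simp [lucasFact]
  | succ m ih =>
    show lucasFact s t m * lucasSeq s t (m + 1) ≠ 0
    exact mul_ne_zero ih (hL (m + 1) (Nat.le_add_left 1 m))

lemma myAux_sum_range_even_odd (f : ℕ → ℂ) (n : ℕ) :
    ∑ j ∈ Finset.range (2 * n + 1), f j
      = ∑ i ∈ Finset.range (n + 1), f (2 * i) + ∑ i ∈ Finset.range n, f (2 * i + 1) := by
  induction n with
  | zero => simp
  | succ m ih =>
    rw [show 2 * (m + 1) + 1 = (2 * m + 1) + 1 + 1 by ring, Finset.sum_range_succ,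
      Finset.sum_range_succ, ih, Finset.sum_range_succ (fun i => f (2 * i)) (m + 1),
      Finset.sum_range_succ (fun i => f (2 * i + 1)) m]
    rw [show 2 * (m + 1) = 2 * m + 1 + 1 by ring]
    ring

lemma lucasSeq_binet (s t d : ℂ) (hd : d ^ 2 = s ^ 2 + 4 * t) :
    ∀ n : ℕ, lucasSeq s t n * d = ((s + d) / 2) ^ n - ((s - d) / 2) ^ n := by
  have hu2 : ((s + d) / 2) ^ 2 = s * ((s + d) / 2) + t := by linear_combination hd / 4
  have hv2 : ((s - d) / 2) ^ 2 = s * ((s - d) / 2) + t := by linear_combination hd / 4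
  intro n
  induction n using Nat.twoStepInduction with
  | zero => simp [lucasSeq]
  | one => simp [lucasSeq]; ring
  | more n ih1 ih2 =>
    show (s * lucasSeq s t (n + 1) + t * lucasSeq s t n) * d = _
    linear_combination s * ih2 + t * ih1 + ((s + d) / 2) ^ n * hu2 - ((s - d) / 2) ^ n * hv2 - (((s + d) / 2) ^ n - ((s - d) / 2) ^ n) / 2 * hd

lemma lucasSeq_add' (s t d : ℂ) (hd : d ^ 2 = s ^ 2 + 4 * t) (hd0 : d ≠ 0) (a b : ℕ) :
    lucasSeq s t (a + b)
      = ((s + d) / 2) ^ a * lucasSeq s t b + ((s - d) / 2) ^ b * lucasSeq s t a := by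
  apply mul_right_cancel₀ hd0
  have h1 := lucasSeq_binet s t d hd (a + b)
  have h2 := lucasSeq_binet s t d hd a
  have h3 := lucasSeq_binet s t d hd b
  linear_combination h1 - ((s + d) / 2) ^ a * h3 - ((s - d) / 2) ^ b * h2

lemma myAux_choose_two_succ (r : ℕ) : (r + 1).choose 2 = r.choose 2 + r := by
  rw [Nat.choose_succ_succ]
  simp [Nat.choose_one_right, Nat.add_comm]

lemma lucasBinom_zero' (s t : ℂ) (hL : ∀ n : ℕ, 1 ≤ n → lucasSeq s t n ≠ 0) (n : ℕ) :
    lucasBinom s t n 0 = 1 := by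
  rw [lucasBinom, show lucasFact s t 0 = 1 from rfl, Nat.sub_zero, one_mul]
  exact div_self (lucasFact_ne_zero s t hL n)

lemma lucasBinom_self' (s t : ℂ) (hL : ∀ n : ℕ, 1 ≤ n → lucasSeq s t n ≠ 0) (n : ℕ) :
    lucasBinom s t n n = 1 := by
  rw [lucasBinom, Nat.sub_self, show lucasFact s t 0 = 1 from rfl, mul_one]
  exact div_self (lucasFact_ne_zero s t hL n)

lemma lucasBinom_pascal' (s t d : ℂ) (hd : d ^ 2 = s ^ 2 + 4 * t) (hd0 : d ≠ 0)
    (hL : ∀ n : ℕ, 1 ≤ n → lucasSeq s t n ≠ 0) (n k : ℕ) (hk : k + 1 ≤ n) :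
    lucasBinom s t (n + 1) (k + 1)
      = ((s + d) / 2) ^ (k + 1) * lucasBinom s t n (k + 1)
        + ((s - d) / 2) ^ (n - k) * lucasBinom s t n k := by
  have hF := lucasFact_ne_zero s t hL
  have key := lucasSeq_add' s t d hd hd0 (k + 1) (n - k)
  rw [show k + 1 + (n - k) = n + 1 by omega] at key
  have e1 : lucasFact s t (n + 1) = lucasFact s t n * lucasSeq s t (n + 1) := rfl
  have e2 : lucasFact s t (n - k) = lucasFact s t (n - (k + 1)) * lucasSeq s t (n - k) := by
    rw [show n - k = (n - (k + 1)) + 1 by omega]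
    rfl
  have e3 : lucasFact s t (k + 1) = lucasFact s t k * lucasSeq s t (k + 1) := rfl
  have hL1 : lucasSeq s t (n + 1) ≠ 0 := hL _ (by omega)
  have hL2 : lucasSeq s t (n - k) ≠ 0 := hL _ (by omega)
  have hL3 : lucasSeq s t (k + 1) ≠ 0 := hL _ (by omega)
  have hne1 : lucasFact s t k * lucasSeq s t (k + 1) * lucasFact s t (n - (k + 1)) ≠ 0 :=
    mul_ne_zero (mul_ne_zero (hF k) hL3) (hF (n - (k + 1)))
  have hne2 : lucasFact s t k * (lucasFact s t (n - (k + 1)) * lucasSeq s t (n - k)) ≠ 0 :=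
    mul_ne_zero (hF k) (mul_ne_zero (hF (n - (k + 1))) hL2)
  have hne3 : lucasFact s t k * lucasSeq s t (k + 1)
      * (lucasFact s t (n - (k + 1)) * lucasSeq s t (n - k)) ≠ 0 :=
    mul_ne_zero (mul_ne_zero (hF k) hL3) (mul_ne_zero (hF (n - (k + 1))) hL2)
  rw [lucasBinom, lucasBinom, lucasBinom, show n + 1 - (k + 1) = n - k from by omega, e1, e2, e3,
    mul_div_assoc', mul_div_assoc', div_add_div _ _ hne1 hne2,
    div_eq_div_iff hne3 (mul_ne_zero hne1 hne2)]
  linear_combination lucasFact s t n * lucasFact s t k ^ 2 * lucasFact s t (n - (k + 1)) ^ 2 *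
      lucasSeq s t (k + 1) * lucasSeq s t (n - k) * key

lemma lucasZero_succ' (s t d : ℂ) (hd : d ^ 2 = s ^ 2 + 4 * t) (hd0 : d ≠ 0)
    (hL : ∀ n : ℕ, 1 ≤ n → lucasSeq s t n ≠ 0) (m : ℕ) :
    lucasZero s t ((s + d) / 2) ((s - d) / 2) (m + 2)
      = (((s + d) / 2) ^ (m + 1) - ((s - d) / 2) ^ (m + 1))
          * lucasZero s t ((s + d) / 2) ((s - d) / 2) (m + 1) := by
  set u : ℂ := (s + d) / 2 with hu
  set v : ℂ := (s - d) / 2 with hv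
  have hF := lucasFact_ne_zero s t hL
  have step : ∀ k ∈ Finset.range (m + 1),
      (-1 : ℂ) ^ (k + 1) * lucasBinom s t (m + 2) (k + 1)
          * u ^ ((m + 2 - (k + 1)).choose 2) * v ^ ((k + 1).choose 2)
        = u ^ (m + 1) * ((-1 : ℂ) ^ (k + 1) * lucasBinom s t (m + 1) (k + 1)
              * u ^ ((m + 1 - (k + 1)).choose 2) * v ^ ((k + 1).choose 2))
          - v ^ (m + 1) * ((-1 : ℂ) ^ k * lucasBinom s t (m + 1) k
              * u ^ ((m + 1 - k).choose 2) * v ^ (k.choose 2)) := by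
    intro k hk
    have hkm : k < m + 1 := Finset.mem_range.mp hk
    obtain ⟨q, rfl⟩ : ∃ q, m = k + q := ⟨m - k, by omega⟩
    rw [lucasBinom_pascal' s t d hd hd0 hL (k + q + 1) k (by omega)]
    rw [show k + q + 2 - (k + 1) = q + 1 from by omega,
      show k + q + 1 - (k + 1) = q from by omega,
      show k + q + 1 - k = q + 1 from by omega,
      myAux_choose_two_succ q, myAux_choose_two_succ k]
    ring
  rw [show m + 2 = (m + 1) + 1 from rfl] at *
  rw [lucasZero, Finset.sum_range_succ, Finset.sum_range_succ']
  rw [Finset.sum_congr rfl step, Finset.sum_sub_distrib, ← Finset.mul_sum, ← Finset.mul_sum]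
  have hA : ∑ k ∈ Finset.range (m + 1),
      (-1 : ℂ) ^ (k + 1) * lucasBinom s t (m + 1) (k + 1)
        * u ^ ((m + 1 - (k + 1)).choose 2) * v ^ ((k + 1).choose 2)
      = lucasZero s t u v (m + 1) - u ^ ((m + 1).choose 2) := by
    have hsp := Finset.sum_range_succ' (fun k => (-1 : ℂ) ^ k * lucasBinom s t (m + 1) k
      * u ^ ((m + 1 - k).choose 2) * v ^ (k.choose 2)) (m + 1)
    rw [lucasZero, hsp, lucasBinom_zero' s t hL]
    simp [show Nat.choose 0 2 = 0 from rfl]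
  have hB : ∑ k ∈ Finset.range (m + 1),
      (-1 : ℂ) ^ k * lucasBinom s t (m + 1) k
        * u ^ ((m + 1 - k).choose 2) * v ^ (k.choose 2)
      = lucasZero s t u v (m + 1) - (-1 : ℂ) ^ (m + 1) * v ^ ((m + 1).choose 2) := by
    have hsp := Finset.sum_range_succ (fun k => (-1 : ℂ) ^ k * lucasBinom s t (m + 1) k
      * u ^ ((m + 1 - k).choose 2) * v ^ (k.choose 2)) (m + 1)
    rw [lucasZero, hsp, lucasBinom_self' s t hL]
    simp [Nat.sub_self, show Nat.choose 0 2 = 0 from rfl]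
  rw [hA, hB]
  rw [lucasBinom_zero' s t hL, lucasBinom_self' s t hL]
  simp only [Nat.sub_zero, Nat.sub_self, myAux_choose_two_succ,
    show Nat.choose 0 2 = 0 from rfl, pow_zero, pow_one]
  ring

lemma lucasZero_eq_zero' (s t d : ℂ) (hd : d ^ 2 = s ^ 2 + 4 * t) (hd0 : d ≠ 0)
    (hL : ∀ n : ℕ, 1 ≤ n → lucasSeq s t n ≠ 0) :
    ∀ m : ℕ, 1 ≤ m → lucasZero s t ((s + d) / 2) ((s - d) / 2) m = 0 := by
  intro m hm
  induction m with
  | zero => omega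
  | succ n ih =>
    rcases Nat.eq_or_lt_of_le hm with h | h
    · -- n + 1 = 1
      have hn : n = 0 := by omega
      subst hn
      have h10 := lucasBinom_zero' s t hL 1
      have h11 := lucasBinom_self' s t hL 1
      simp [lucasZero, Finset.sum_range_succ, h10, h11]
    · have hn : 1 ≤ n := by omega
      obtain ⟨p, rfl⟩ : ∃ p, n = p + 1 := ⟨n - 1, by omega⟩
      rw [lucasZero_succ' s t d hd hd0 hL p, ih hn, mul_zero]

/-- Lucas-Pantograph-Pythagorean identities, where `φ = (s+d)/2`, `φ' = (s-d)/2`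
with `d` a square root of `s²+4t`. -/
theorem lucas_pythagorean (s t : ℂ) (hs : s ≠ 0) (ht : t ≠ 0)
    (hL : ∀ n : ℕ, 1 ≤ n → lucasSeq s t n ≠ 0)
    (d : ℂ) (hd : d ^ 2 = s ^ 2 + 4 * t)
    (x u v : ℂ) (hu : u ≠ 0) (hv : v ≠ 0)
    (hconvsu : Summable fun n : ℕ =>
      ‖(-1 : ℂ) ^ n * u ^ ((2 * n + 1).choose 2) * x ^ (2 * n + 1) / lucasFact s t (2 * n + 1)‖)
    (hconvcu : Summable fun n : ℕ =>
      ‖(-1 : ℂ) ^ n * u ^ ((2 * n).choose 2) * x ^ (2 * n) / lucasFact s t (2 * n)‖)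
    (hconvsv : Summable fun n : ℕ =>
      ‖(-1 : ℂ) ^ n * v ^ ((2 * n + 1).choose 2) * x ^ (2 * n + 1) / lucasFact s t (2 * n + 1)‖)
    (hconvcv : Summable fun n : ℕ =>
      ‖(-1 : ℂ) ^ n * v ^ ((2 * n).choose 2) * x ^ (2 * n) / lucasFact s t (2 * n)‖) :
    HasSum (fun n : ℕ =>
        (-1 : ℂ) ^ n * lucasZero s t u v (2 * n) * x ^ (2 * n) / lucasFact s t (2 * n))
      (lucasSin s t u x * lucasSin s t v x + lucasCos s t u x * lucasCos s t v x) ∧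
    (s ^ 2 + 4 * t ≠ 0 → u = (s + d) / 2 → v = (s - d) / 2 →
      lucasSin s t u x * lucasSin s t v x + lucasCos s t u x * lucasCos s t v x = 1) := by
  have hF := lucasFact_ne_zero s t hL
  set a : ℕ → ℂ := fun n =>
    (-1 : ℂ) ^ n * u ^ ((2 * n + 1).choose 2) * x ^ (2 * n + 1) / lucasFact s t (2 * n + 1)
    with ha
  set b : ℕ → ℂ := fun n =>
    (-1 : ℂ) ^ n * v ^ ((2 * n + 1).choose 2) * x ^ (2 * n + 1) / lucasFact s t (2 * n + 1)
    with hb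
  set c : ℕ → ℂ := fun n =>
    (-1 : ℂ) ^ n * u ^ ((2 * n).choose 2) * x ^ (2 * n) / lucasFact s t (2 * n) with hc
  set e2 : ℕ → ℂ := fun n =>
    (-1 : ℂ) ^ n * v ^ ((2 * n).choose 2) * x ^ (2 * n) / lucasFact s t (2 * n) with he2
  have hS : HasSum (fun n => ∑ k ∈ Finset.range (n + 1), a k * b (n - k))
      (lucasSin s t u x * lucasSin s t v x) :=
    hasSum_sum_range_mul_of_summable_norm hconvsu hconvsv
  have hCC : HasSum (fun n => ∑ k ∈ Finset.range (n + 1), c k * e2 (n - k))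
      (lucasCos s t u x * lucasCos s t v x) :=
    hasSum_sum_range_mul_of_summable_norm hconvcu hconvcv
  have hS' : HasSum (fun n => match n with
        | 0 => (0 : ℂ)
        | m + 1 => ∑ k ∈ Finset.range (m + 1), a k * b (m - k))
      (lucasSin s t u x * lucasSin s t v x) := by
    refine (Function.Injective.hasSum_iff Nat.succ_injective ?_).mp ?_
    · intro m hm
      match m with
      | 0 => rfl
      | m + 1 => exact absurd ⟨m, rfl⟩ hm
    · exact hS
  have hsum := hS'.add hCC
  have targ : ∀ n : ℕ,
      (-1 : ℂ) ^ n * lucasZero s t u v (2 * n) * x ^ (2 * n) / lucasFact s t (2 * n)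
        = ∑ j ∈ Finset.range (2 * n + 1),
            (-1 : ℂ) ^ (n + j) * u ^ ((2 * n - j).choose 2) * v ^ (j.choose 2) * x ^ (2 * n)
              / (lucasFact s t (2 * n - j) * lucasFact s t j) := by
    intro n
    rw [lucasZero, Finset.mul_sum, Finset.sum_mul, Finset.sum_div]
    refine Finset.sum_congr rfl fun j hj => ?_
    rw [lucasBinom, pow_add]
    field_simp [hF (2 * n), hF j, hF (2 * n - j)]
  have key : ∀ n : ℕ,
      (match n with
        | 0 => (0 : ℂ)
        | m + 1 => ∑ k ∈ Finset.range (m + 1), a k * b (m - k))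
        + ∑ k ∈ Finset.range (n + 1), c k * e2 (n - k)
      = (-1 : ℂ) ^ n * lucasZero s t u v (2 * n) * x ^ (2 * n) / lucasFact s t (2 * n) := by
    intro n
    match n with
    | 0 =>
      show 0 + _ = _
      rw [zero_add, Finset.sum_range_one, targ 0, Finset.sum_range_one]
      rw [hc, he2]
      norm_num [lucasFact]
    | m + 1 =>
      show (∑ k ∈ Finset.range (m + 1), a k * b (m - k)) + _ = _
      rw [targ (m + 1), myAux_sum_range_even_odd _ (m + 1)]
      have hcos : ∑ k ∈ Finset.range (m + 1 + 1), c k * e2 (m + 1 - k)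
          = ∑ i ∈ Finset.range (m + 1 + 1),
              (-1 : ℂ) ^ (m + 1 + 2 * i) * u ^ ((2 * (m + 1) - 2 * i).choose 2)
                * v ^ ((2 * i).choose 2) * x ^ (2 * (m + 1))
                / (lucasFact s t (2 * (m + 1) - 2 * i) * lucasFact s t (2 * i)) := by
        conv_rhs => rw [← Finset.sum_range_reflect]
        refine Finset.sum_congr rfl fun k hk => ?_
        have hk' : k < m + 1 + 1 := Finset.mem_range.mp hk
        obtain ⟨j, hj⟩ : ∃ j, m + 1 = k + j := ⟨m + 1 - k, by omega⟩
        rw [show m + 1 + 1 - 1 - k = j from by omega, show m + 1 - k = j from by omega,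
          show 2 * (m + 1) - 2 * j = 2 * k from by omega, hj]
        have hsign : (-1 : ℂ) ^ (k + j + 2 * j) = (-1) ^ k * (-1) ^ j := by
          rw [pow_add, pow_add, pow_mul]
          norm_num
        rw [hsign, hc, he2]
        dsimp only
        ring
      have hsin : ∑ k ∈ Finset.range (m + 1), a k * b (m - k)
          = ∑ i ∈ Finset.range (m + 1),
              (-1 : ℂ) ^ (m + 1 + (2 * i + 1)) * u ^ ((2 * (m + 1) - (2 * i + 1)).choose 2)
                * v ^ ((2 * i + 1).choose 2) * x ^ (2 * (m + 1))
                / (lucasFact s t (2 * (m + 1) - (2 * i + 1)) * lucasFact s t (2 * i + 1)) := by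
        conv_rhs => rw [← Finset.sum_range_reflect]
        refine Finset.sum_congr rfl fun k hk => ?_
        have hk' : k < m + 1 := Finset.mem_range.mp hk
        obtain ⟨j, hj⟩ : ∃ j, m = k + j := ⟨m - k, by omega⟩
        rw [show m + 1 - 1 - k = j from by omega, show m - k = j from by omega,
          show 2 * (m + 1) - (2 * j + 1) = 2 * k + 1 from by omega,
          show m + 1 = k + j + 1 from by omega]
        have hsign : (-1 : ℂ) ^ (k + j + 1 + (2 * j + 1)) = (-1) ^ k * (-1) ^ j := by
          rw [show k + j + 1 + (2 * j + 1) = k + j + 2 * (j + 1) from by ring, pow_add, pow_add,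
            pow_mul]
          norm_num
        rw [hsign, ha, hb]
        dsimp only
        ring
      rw [hcos, hsin, add_comm]
    
  have part1 : HasSum (fun n : ℕ =>
      (-1 : ℂ) ^ n * lucasZero s t u v (2 * n) * x ^ (2 * n) / lucasFact s t (2 * n))
      (lucasSin s t u x * lucasSin s t v x + lucasCos s t u x * lucasCos s t v x) := by
    have := funext key
    rw [← this]
    exact hsum
  refine ⟨part1, fun hst hu' hv' => ?_⟩
  subst hu'
  subst hv'
  have hd0 : d ≠ 0 := by
    intro h
    apply hst
    rw [← hd, h]
    ring
  have hfun2 : (fun n : ℕ => (-1 : ℂ) ^ n * lucasZero s t ((s + d) / 2) ((s - d) / 2) (2 * n)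
        * x ^ (2 * n) / lucasFact s t (2 * n))
      = fun n : ℕ => if n = 0 then (1 : ℂ) else 0 := by
    funext n
    match n with
    | 0 =>
      simp only [if_pos rfl]
      norm_num [lucasZero, lucasBinom, lucasFact]
    | m + 1 =>
      rw [lucasZero_eq_zero' s t d hd hd0 hL (2 * (m + 1)) (by omega)]
      simp
  rw [hfun2] at part1
  exact part1.unique (hasSum_ite_eq 0 1)
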